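/- arXiv:1911.03146 — 3 statements merged into one kernel-verified Lean document; each statement's English description precedes it below -/
import Mathlib

section
/- Let d ≥ 1 be a natural number and let F_d := ∏_{i=0}^{d} (1 + (d−i)·X + i·Y) in ℤ[X,Y]. Then there exists a two-variable polynomial R ∈ ℤ[S,T] all of whose coefficients are nonnegative such that F_d = R(e₁, e₂), where e₁ = X+Y and e₂ = X·Y; that is, the total Chern class of Sym^d of a rank-2 bundle is a polynomial with nonnegative integer coefficients in c₁ and c₂. -/
open MvPolynomial Finset

/-- `Xp` is the first Chern root. -/
noncomputable def Xp : MvPolynomial (Fin 2) ℤ := MvPolynomial.X 0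
/-- `Yp` is the second Chern root. -/
noncomputable def Yp : MvPolynomial (Fin 2) ℤ := MvPolynomial.X 1

/-- `F d` is the total Chern class of `Sym^d` of a rank-2 bundle with Chern
roots `X`, `Y`. -/
noncomputable def F (d : ℕ) : MvPolynomial (Fin 2) ℤ :=
  ∏ i ∈ Finset.range (d + 1), (1 + C ((d : ℤ) - (i : ℤ)) * Xp + C (i : ℤ) * Yp)

/-- `e₁ = X + Y` plays the role of `c₁`. -/
noncomputable def e1 : MvPolynomial (Fin 2) ℤ := Xp + Yp
/-- `e₂ = X·Y` plays the role of `c₂`. -/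
noncomputable def e2 : MvPolynomial (Fin 2) ℤ := Xp * Yp

/-- single factor -/
noncomputable def fct (d i : ℕ) : MvPolynomial (Fin 2) ℤ :=
  1 + C ((d : ℤ) - (i : ℤ)) * Xp + C (i : ℤ) * Yp

/-- nonnegative coefficients predicate -/
def NN (p : MvPolynomial (Fin 2) ℤ) : Prop := ∀ m, 0 ≤ p.coeff m

lemma NN_one : NN 1 := by
  intro m
  simp [MvPolynomial.coeff_one]
  split <;> simp

lemma NN_C {c : ℤ} (h : 0 ≤ c) : NN (C c) := by
  intro m
  rw [MvPolynomial.coeff_C]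
  split <;> simp [h]

lemma NN_X (i : Fin 2) : NN (X i : MvPolynomial (Fin 2) ℤ) := by
  intro m
  classical
  simp [MvPolynomial.coeff_X']
  split <;> simp

lemma NN_add {p q : MvPolynomial (Fin 2) ℤ} (hp : NN p) (hq : NN q) : NN (p + q) := by
  intro m
  simp only [MvPolynomial.coeff_add]
  exact add_nonneg (hp m) (hq m)

lemma NN_mul {p q : MvPolynomial (Fin 2) ℤ} (hp : NN p) (hq : NN q) : NN (p * q) := by
  intro m
  rw [MvPolynomial.coeff_mul]
  exact Finset.sum_nonneg fun x _ => mul_nonneg (hp x.1) (hq x.2)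

/-- the pair factor in variables S, T -/
noncomputable def Q (d a : ℕ) : MvPolynomial (Fin 2) ℤ :=
  1 + C (d : ℤ) * X 0 + C ((a : ℤ) * ((d : ℤ) - a)) * X 0 ^ 2
    + C (((d : ℤ) - 2 * a) ^ 2) * X 1

lemma NN_Q (d a : ℕ) (h : a ≤ d) : NN (Q d a) := by
  have h1 : (0:ℤ) ≤ (a : ℤ) * ((d : ℤ) - a) := by
    apply mul_nonneg (by positivity)
    have : (a : ℤ) ≤ d := by exact_mod_cast h
    linarith
  have hsq : NN ((X 0 : MvPolynomial (Fin 2) ℤ) ^ 2) := by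
    rw [sq]; exact NN_mul (NN_X 0) (NN_X 0)
  exact NN_add (NN_add (NN_add NN_one (NN_mul (NN_C (by positivity)) (NN_X 0)))
    (NN_mul (NN_C h1) hsq)) (NN_mul (NN_C (by positivity)) (NN_X 1))

lemma pair_eq (d a : ℕ) (h : a ≤ d) :
    fct d a * fct d (d - a) = MvPolynomial.aeval ![e1, e2] (Q d a) := by
  have hc : ((d - a : ℕ) : ℤ) = (d : ℤ) - a := by
    push_cast [h]; ring
  simp only [Q, map_add, map_mul, map_one, map_pow, aeval_X, aeval_C, fct, hc,
    Matrix.cons_val_zero, Matrix.cons_val_one, Matrix.head_cons, algebraMap_eq]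
  simp only [e1, e2, map_mul, map_sub, map_ofNat, map_natCast]
  ring

lemma main (d : ℕ) : ∀ n a : ℕ, 2 * a + n = d + 1 →
    ∃ R : MvPolynomial (Fin 2) ℤ,
      NN R ∧ (∏ i ∈ Finset.Ico a (a + n), fct d i) = MvPolynomial.aeval ![e1, e2] R := by
  intro n
  induction n using Nat.strong_induction_on with
  | _ n ih =>
    match n with
    | 0 =>
      intro a _
      exact ⟨1, NN_one, by simp⟩
    | 1 =>
      intro a ha
      have hda : d = 2 * a := by omega
      refine ⟨1 + C (a : ℤ) * X 0, NN_add NN_one (NN_mul (NN_C (by positivity)) (NN_X 0)), ?_⟩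
      simp only [Finset.Ico_self, map_add, map_mul, map_one, aeval_X, aeval_C,
        Matrix.cons_val_zero, algebraMap_eq, Finset.prod_Ico_eq_prod_range]
      simp [fct, hda, e1]
      ring
    | (m + 2) =>
      intro a ha
      obtain ⟨R', hR', hprod⟩ := ih m (by omega) (a + 1) (by omega)
      have hle : a ≤ d := by omega
      have hsplit : (∏ i ∈ Finset.Ico a (a + (m + 2)), fct d i)
          = fct d a * (∏ i ∈ Finset.Ico (a + 1) (a + 1 + m), fct d i) * fct d (a + m + 1) := by
        rw [show a + (m + 2) = (a + m + 1) + 1 by ring,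
          Finset.prod_Ico_succ_top (by omega),
          Finset.prod_eq_prod_Ico_succ_bot (by omega)]
        ring_nf
      have hd' : a + m + 1 = d - a := by omega
      refine ⟨Q d a * R', NN_mul (NN_Q d a hle) hR', ?_⟩
      rw [hsplit, map_mul]
      rw [mul_right_comm, hprod, ← pair_eq d a hle, hd']

/-- The total Chern class of `Sym^d` of a rank-2 bundle is a polynomial with
nonnegative integer coefficients in `c₁` and `c₂`. -/
theorem stmt3 (d : ℕ) (hd : 1 ≤ d) :
    ∃ R : MvPolynomial (Fin 2) ℤ,
      (∀ m, 0 ≤ R.coeff m) ∧ F d = MvPolynomial.aeval ![e1, e2] R := by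
  obtain ⟨R, hR, hprod⟩ := main d (d + 1) 0 (by omega)
  refine ⟨R, hR, ?_⟩
  have hr : Finset.Ico 0 (0 + (d + 1)) = Finset.range (d + 1) := by
    rw [zero_add, Finset.range_eq_Ico]
  rw [hr] at hprod
  simp only [fct] at hprod
  rw [F]
  exact hprod
end

section
/- Let d ≥ 1 be a natural number, let F_d := ∏_{i=0}^{d} (1 + (d−i)·X + i·Y) in ℤ[X,Y], and let 1 ≤ j ≤ d. Then there exist a positive integer a_j and a two-variable polynomial Q ∈ ℤ[S,T] all of whose coefficients are nonnegative such that the homogeneous component of degree j of F_d (with X and Y each of degree 1) equals a_j·(X+Y)^j + (X·Y)·Q(e₁, e₂), where e₁ = X+Y and e₂ = X·Y. In Chern-class terms: for j ≤ d, the class c_j(Sym^d) of a rank-2 bundle equals a_j·c₁^j plus a polynomial in c₁, c₂ with nonnegative coefficients each of whose monomials involves c₂. -/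
open MvPolynomial Finset

/-- `Nn p` means `p` is a polynomial expression in `e1, e2` with nonnegative
integer coefficients. -/
def Nn (p : MvPolynomial (Fin 2) ℤ) : Prop :=
  ∃ Q : MvPolynomial (Fin 2) ℤ, (∀ m, 0 ≤ Q.coeff m) ∧ p = aeval ![e1, e2] Q

lemma Nn_C {a : ℤ} (h : 0 ≤ a) : Nn (C a) := by
  refine ⟨C a, fun m => ?_, by simp⟩
  rw [coeff_C]
  split <;> simp [h]

lemma Nn_one : Nn 1 := by simpa using Nn_C (le_of_lt Int.one_pos)

lemma Nn_e1 : Nn e1 := by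
  refine ⟨X 0, fun m => ?_, by simp⟩
  rw [coeff_X']
  split <;> simp

lemma Nn_e2 : Nn e2 := by
  refine ⟨X 1, fun m => ?_, by simp⟩
  rw [coeff_X']
  split <;> simp

lemma Nn_add {p q} (hp : Nn p) (hq : Nn q) : Nn (p + q) := by
  obtain ⟨P, hP, rfl⟩ := hp
  obtain ⟨Q, hQ, rfl⟩ := hq
  exact ⟨P + Q, fun m => by simpa [coeff_add] using add_nonneg (hP m) (hQ m), by simp⟩

lemma Nn_mul {p q} (hp : Nn p) (hq : Nn q) : Nn (p * q) := by
  obtain ⟨P, hP, rfl⟩ := hp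
  obtain ⟨Q, hQ, rfl⟩ := hq
  refine ⟨P * Q, fun m => ?_, by simp⟩
  rw [coeff_mul]
  exact Finset.sum_nonneg fun x _ => mul_nonneg (hP _) (hQ _)

/-- The key induction: shifted total Chern classes of symmetric powers are
nonnegative polynomials in `e1, e2`. -/
lemma key : ∀ (d : ℕ) (u : MvPolynomial (Fin 2) ℤ), Nn u →
    Nn (∏ i ∈ Finset.range (d + 1), (u + C ((d : ℤ) - (i : ℤ)) * Xp + C (i : ℤ) * Yp)) := by
  intro d
  induction d using Nat.twoStepInduction with
  | zero =>
    intro u hu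
    simpa using hu
  | one =>
    intro u hu
    rw [Finset.prod_range_succ, Finset.prod_range_one]
    have : (u + C (((1:ℕ):ℤ) - ((0:ℕ):ℤ)) * Xp + C (((0:ℕ)):ℤ) * Yp) *
        (u + C (((1:ℕ):ℤ) - ((1:ℕ):ℤ)) * Xp + C ((1:ℕ):ℤ) * Yp)
        = u * u + u * e1 + e2 := by
      push_cast
      simp only [sub_zero, sub_self, C_0, C_1, zero_mul, add_zero, one_mul, e1, e2]
      ring
    rw [this]
    exact Nn_add (Nn_add (Nn_mul hu hu) (Nn_mul hu Nn_e1)) Nn_e2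
  | more n ih _ =>
    intro u hu
    rw [Finset.prod_range_succ', Finset.prod_range_succ]
    have hmid : ∀ i ∈ Finset.range (n + 1),
        (u + C (((n+2:ℕ) : ℤ) - ((i+1 : ℕ) : ℤ)) * Xp + C ((i+1 : ℕ) : ℤ) * Yp)
        = (u + e1) + C ((n : ℤ) - (i : ℤ)) * Xp + C (i : ℤ) * Yp := by
      intro i _
      push_cast
      rw [show ((n:ℤ) + 2 - ((i:ℤ) + 1)) = ((n:ℤ) - i) + 1 by ring, C_add, C_1,
        show ((i:ℤ) + 1) = (i:ℤ) + 1 from rfl, C_add, C_1, e1]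
      ring
    rw [Finset.prod_congr rfl hmid]
    have hlast : (u + C (((n+2:ℕ) : ℤ) - ((n+2 : ℕ) : ℤ)) * Xp + C ((n+2 : ℕ) : ℤ) * Yp) *
        (u + C (((n+2:ℕ) : ℤ) - ((0 : ℕ) : ℤ)) * Xp + C ((0 : ℕ) : ℤ) * Yp)
        = u * u + C ((n+2 : ℕ) : ℤ) * (u * e1) + C ((n+2 : ℕ) : ℤ) * C ((n+2 : ℕ) : ℤ) * e2 := by
      rw [sub_self, C_0, zero_mul, add_zero, Nat.cast_zero, C_0, zero_mul, add_zero, sub_zero,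
        e1, e2]
      ring
    rw [mul_assoc, hlast]
    have hn2 : (0:ℤ) ≤ ((n+2:ℕ) : ℤ) := by positivity
    exact Nn_mul (ih (u + e1) (Nn_add hu Nn_e1))
      (Nn_add (Nn_add (Nn_mul hu hu) (Nn_mul (Nn_C hn2) (Nn_mul hu Nn_e1)))
        (Nn_mul (Nn_mul (Nn_C hn2) (Nn_C hn2)) Nn_e2))

/-- Positivity of low-degree coefficients of products `∏ (1 + aᵢ·x)` with `aᵢ ≥ 1`. -/
lemma lemA (n : ℕ) (a : ℕ → ℤ) (ha : ∀ i < n, 1 ≤ a i) :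
    (∀ k, 0 ≤ (∏ i ∈ Finset.range n, (1 + Polynomial.C (a i) * Polynomial.X)).coeff k) ∧
    ∀ j ≤ n, 0 < (∏ i ∈ Finset.range n, (1 + Polynomial.C (a i) * Polynomial.X)).coeff j := by
  induction n with
  | zero =>
    constructor
    · intro k
      rw [Finset.prod_range_zero, Polynomial.coeff_one]
      split <;> simp
    · intro j hj
      interval_cases j
      simp
  | succ n ih =>
    obtain ⟨h1, h2⟩ := ih fun i hi => ha i (hi.trans n.lt_succ_self)
    set p := ∏ i ∈ Finset.range n, (1 + Polynomial.C (a i) * Polynomial.X) with hp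
    have hxk : ∀ k, 0 ≤ (p * Polynomial.X).coeff k := by
      intro k
      cases k with
      | zero => simp [Polynomial.coeff_mul_X_zero]
      | succ k => rw [Polynomial.coeff_mul_X]; exact h1 k
    have hc : ∀ k, ((∏ i ∈ Finset.range (n+1), (1 + Polynomial.C (a i) * Polynomial.X)).coeff k)
        = p.coeff k + a n * (p * Polynomial.X).coeff k := by
      intro k
      rw [Finset.prod_range_succ, ← hp,
        show p * (1 + Polynomial.C (a n) * Polynomial.X)
          = p + Polynomial.C (a n) * (p * Polynomial.X) by ring,
        Polynomial.coeff_add, Polynomial.coeff_C_mul]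
    have han : 1 ≤ a n := ha n n.lt_succ_self
    constructor
    · intro k
      rw [hc]
      exact add_nonneg (h1 k) (mul_nonneg (by linarith) (hxk k))
    · intro j hj
      rw [hc]
      cases j with
      | zero =>
        rw [Polynomial.coeff_mul_X_zero, mul_zero, add_zero]
        exact h2 0 n.zero_le
      | succ j =>
        rw [Polynomial.coeff_mul_X]
        have hpj : 0 < p.coeff j := h2 j (by omega)
        nlinarith [h1 (j+1)]

/-- The specialization `Y ↦ 0`, landing in `ℤ[x]`. -/
noncomputable def ψ : MvPolynomial (Fin 2) ℤ →ₐ[ℤ] Polynomial ℤ :=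
  aeval ![Polynomial.X, (0 : Polynomial ℤ)]

lemma hψe1 : ψ e1 = Polynomial.X := by simp [ψ, e1, Xp, Yp]
lemma hψe2 : ψ e2 = 0 := by simp [ψ, e2, Xp, Yp]
lemma hψC (c : ℤ) : ψ (C c) = Polynomial.C c := by
  simp [ψ, algebraMap_int_eq]

lemma hψF (d : ℕ) : ψ (F d) = ∏ i ∈ Finset.range (d + 1),
    (1 + Polynomial.C ((d : ℤ) - (i : ℤ)) * Polynomial.X) := by
  unfold F
  rw [map_prod]
  refine Finset.prod_congr rfl fun i _ => ?_
  rw [map_add, map_add, map_one, map_mul, map_mul, hψC, hψC]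
  simp [ψ, Xp, Yp]

lemma he1 : e1.IsHomogeneous 1 := (isHomogeneous_X _ _).add (isHomogeneous_X _ _)
lemma he2 : e2.IsHomogeneous 2 := (isHomogeneous_X _ _).mul (isHomogeneous_X _ _)

lemma hterm (c : ℤ) (p q : ℕ) :
    (C c * (e1 ^ p * e2 ^ q)).IsHomogeneous (p + 2 * q) := by
  have := (isHomogeneous_C (Fin 2) c).mul ((he1.pow p).mul (he2.pow q))
  simpa [two_mul, mul_comm] using this

/-- For `1 ≤ j ≤ d`, the Chern class `c_j(Sym^d)` of a rank-2 bundle equals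
`a_j·c₁^j` with `a_j > 0` plus `c₂` times a polynomial in `c₁, c₂` with
nonnegative coefficients. -/
theorem stmt4 (d j : ℕ) (hd : 1 ≤ d) (hj1 : 1 ≤ j) (hjd : j ≤ d) :
    ∃ (a : ℤ) (Q : MvPolynomial (Fin 2) ℤ),
      0 < a ∧ (∀ m, 0 ≤ Q.coeff m) ∧
      MvPolynomial.homogeneousComponent j (F d) =
        C a * e1 ^ j + e2 * MvPolynomial.aeval ![e1, e2] Q := by
  obtain ⟨Q0, hQ0, hF⟩ : Nn (F d) := by unfold F; exact key d 1 Nn_one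
  have hrep : F d = ∑ m ∈ Q0.support, C (Q0.coeff m) * (e1 ^ m 0 * e2 ^ m 1) := by
    rw [hF, aeval_def, eval₂_eq']
    refine Finset.sum_congr rfl fun m _ => ?_
    rw [Fin.prod_univ_two]
    simp [algebraMap_int_eq]
  have hhom : ∀ i, homogeneousComponent i (F d)
      = ∑ m ∈ Q0.support.filter (fun m => m 0 + 2 * m 1 = i),
          C (Q0.coeff m) * (e1 ^ m 0 * e2 ^ m 1) := by
    intro i
    rw [hrep, map_sum, Finset.sum_filter]
    refine Finset.sum_congr rfl fun m _ => ?_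
    rw [homogeneousComponent_of_mem ((mem_homogeneousSubmodule _ _).mpr
      (hterm (Q0.coeff m) (m 0) (m 1)))]
    by_cases h : m 0 + 2 * m 1 = i
    · rw [if_pos h, if_pos h.symm]
    · rw [if_neg h, if_neg fun hh => h hh.symm]
  set a : ℤ := ∑ m ∈ (Q0.support.filter (fun m => m 0 + 2 * m 1 = j)).filter
      (fun m => m 1 = 0), Q0.coeff m with ha
  set Q : MvPolynomial (Fin 2) ℤ :=
      ∑ m ∈ (Q0.support.filter (fun m => m 0 + 2 * m 1 = j)).filter (fun m => ¬ m 1 = 0),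
        monomial (Finsupp.single 0 (m 0) + Finsupp.single 1 (m 1 - 1)) (Q0.coeff m) with hQdef
  have hQnn : ∀ m', 0 ≤ Q.coeff m' := by
    intro m'
    rw [hQdef, MvPolynomial.coeff_sum]
    refine Finset.sum_nonneg fun m hm => ?_
    rw [coeff_monomial]
    split
    · exact hQ0 m
    · exact le_refl 0
  have hmain : homogeneousComponent j (F d) = C a * e1 ^ j + e2 * aeval ![e1, e2] Q := by
    rw [hhom j, ← Finset.sum_filter_add_sum_filter_not
      (Q0.support.filter (fun m => m 0 + 2 * m 1 = j)) (fun m => m 1 = 0)]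
    congr 1
    · rw [ha, map_sum, Finset.sum_mul]
      refine Finset.sum_congr rfl fun m hm => ?_
      rw [Finset.mem_filter] at hm
      obtain ⟨hm1, h10⟩ := hm
      rw [Finset.mem_filter] at hm1
      have h0j : m 0 = j := by omega
      rw [h10, h0j, pow_zero, mul_one]
    · rw [hQdef, map_sum, Finset.mul_sum]
      refine Finset.sum_congr rfl fun m hm => ?_
      rw [Finset.mem_filter] at hm
      obtain ⟨-, h10⟩ := hm
      rw [aeval_monomial, Finsupp.prod_fintype _ _ (fun i => pow_zero _), Fin.prod_univ_two]
      have e0 : ((Finsupp.single (0:Fin 2) (m 0) + Finsupp.single 1 (m 1 - 1)) : Fin 2 →₀ ℕ) 0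
          = m 0 := by simp
      have e1' : ((Finsupp.single (0:Fin 2) (m 0) + Finsupp.single 1 (m 1 - 1)) : Fin 2 →₀ ℕ) 1
          = m 1 - 1 := by simp
      rw [e0, e1']
      simp only [MvPolynomial.algebraMap_eq, Matrix.cons_val_zero, Matrix.cons_val_one,
        Matrix.head_cons]
      conv_lhs => rw [show m 1 = (m 1 - 1) + 1 from
        (Nat.succ_pred_eq_of_pos (Nat.pos_of_ne_zero h10)).symm]
      rw [pow_succ]
      ring
  have hψhom : ∀ i k, k ≠ i → (ψ (homogeneousComponent i (F d))).coeff k = 0 := by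
    intro i k hk
    rw [hhom i, map_sum, Polynomial.finset_sum_coeff]
    refine Finset.sum_eq_zero fun m hm => ?_
    rw [Finset.mem_filter] at hm
    rw [map_mul, map_mul, map_pow, map_pow, hψe1, hψe2, hψC]
    rcases Nat.eq_zero_or_pos (m 1) with h1 | h1
    · have h0 : m 0 = i := by omega
      rw [h1, pow_zero, mul_one, h0, Polynomial.coeff_C_mul, Polynomial.coeff_X_pow,
        if_neg hk, mul_zero]
    · rw [zero_pow h1.ne', mul_zero, mul_zero, Polynomial.coeff_zero]
  have hψj : ψ (homogeneousComponent j (F d)) = Polynomial.C a * Polynomial.X ^ j := by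
    rw [hmain, map_add, map_mul, map_mul, map_pow, hψe1, hψe2, hψC, zero_mul, add_zero]
  have haj : (ψ (F d)).coeff j = a := by
    conv_lhs => rw [← sum_homogeneousComponent (F d)]
    rw [map_sum, Polynomial.finset_sum_coeff]
    by_cases hjD : j ∈ Finset.range ((F d).totalDegree + 1)
    · rw [Finset.sum_eq_single_of_mem j hjD fun i _ hij => hψhom i j (Ne.symm hij)]
      rw [hψj, Polynomial.coeff_C_mul, Polynomial.coeff_X_pow, if_pos rfl, mul_one]
    · have hD : (F d).totalDegree < j := by
        rw [Finset.mem_range] at hjD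
        omega
      have h0 : homogeneousComponent j (F d) = 0 := homogeneousComponent_eq_zero _ _ hD
      have ha0 : Polynomial.C a * Polynomial.X ^ j = 0 := by rw [← hψj, h0, map_zero]
      have ha0' : a = 0 := by
        have := congrArg (fun p => Polynomial.coeff p j) ha0
        simpa [Polynomial.coeff_C_mul, Polynomial.coeff_X_pow] using this
      rw [ha0']
      refine Finset.sum_eq_zero fun i hi => ?_
      exact hψhom i j fun h => hjD (h ▸ hi)
  have hpos : 0 < (ψ (F d)).coeff j := by
    rw [hψF d, Finset.prod_range_succ]
    have hone : (1 + Polynomial.C ((d:ℤ) - ((d:ℕ):ℤ)) * Polynomial.X) = 1 := by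
      simp
    rw [hone, mul_one]
    exact (lemA d (fun i => (d:ℤ) - i) (fun i hi => by show (1:ℤ) ≤ (d:ℤ) - (i:ℤ); omega)).2 j hjd
  exact ⟨a, Q, haj ▸ hpos, hQnn, hmain⟩
end

section
/- Let d ≥ 1 be a natural number and let F_d := ∏_{i=0}^{d} (1 + (d−i)·X + i·Y) in ℤ[X,Y]. Then there exists a two-variable polynomial P ∈ ℤ[S,T] all of whose coefficients are nonnegative and whose coefficient on the monomial S^{d−1} is strictly positive, such that the homogeneous component of degree d+1 of F_d (with X and Y each of degree 1) equals (X·Y)·P(e₁, e₂), where e₁ = X+Y and e₂ = X·Y. In Chern-class terms: the top Chern class c_{d+1}(Sym^d) of a rank-2 bundle equals c₂ times a polynomial in c₁, c₂ with nonnegative coefficients in which the monomial c₁^{d−1} occurs with positive coefficient. -/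
open MvPolynomial Finset

theorem hc_succ_mul (L p : MvPolynomial (Fin 2) ℤ) (hL : L.IsHomogeneous 1) (n : ℕ) :
    homogeneousComponent (n+1) (L * p) = L * homogeneousComponent n p := by
  conv_lhs => rw [← sum_homogeneousComponent p]
  rw [Finset.mul_sum, map_sum]
  have key : ∀ k, homogeneousComponent (n+1) (L * homogeneousComponent k p)
      = if n + 1 = k + 1 then L * homogeneousComponent k p else 0 := fun k =>
    homogeneousComponent_of_mem (by
      have := hL.mul (homogeneousComponent_isHomogeneous k p)
      rwa [add_comm] at this)
  simp only [key, Nat.add_right_cancel_iff]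
  rw [Finset.sum_ite_eq (Finset.range (p.totalDegree + 1)) n
    (fun k => L * homogeneousComponent k p)]
  by_cases h : n ∈ Finset.range (p.totalDegree + 1)
  · simp [h]
  · rw [if_neg h, homogeneousComponent_eq_zero, mul_zero]
    simp only [Finset.mem_range, not_lt] at h
    omega

theorem hc_prod_one_add (s : Finset ℕ) (L : ℕ → MvPolynomial (Fin 2) ℤ)
    (hL : ∀ i, (L i).IsHomogeneous 1) :
    homogeneousComponent s.card (∏ i ∈ s, (1 + L i)) = ∏ i ∈ s, L i := by
  classical
  induction s using Finset.cons_induction with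
  | empty => simp [homogeneousComponent_zero]
  | cons a s ha ih =>
    rw [Finset.prod_cons, Finset.prod_cons, Finset.card_cons, add_mul, one_mul,
      map_add, hc_succ_mul _ _ (hL a), ih, homogeneousComponent_eq_zero, zero_add]
    calc (∏ i ∈ s, (1 + L i)).totalDegree ≤ ∑ i ∈ s, (1 + L i).totalDegree :=
          totalDegree_finset_prod s _
      _ ≤ ∑ i ∈ s, 1 := Finset.sum_le_sum (fun i _ => by
          refine (totalDegree_add _ _).trans ?_
          simp only [totalDegree_one, max_le_iff]
          constructor
          · omega
          · by_cases h : L i = 0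
            · simp [h]
            · exact le_of_eq ((hL i).totalDegree h))
      _ < s.card + 1 := by simp

noncomputable def g : ℕ → ℕ → MvPolynomial (Fin 2) ℤ
  | _, 0 => 1
  | j, 1 => C (j : ℤ) * X 0
  | j, (n+2) => (C ((j * (j+n+1) : ℕ) : ℤ) * X 0 ^ 2 + C (((n+1)^2 : ℕ) : ℤ) * X 1) * g (j+1) n

theorem mul_coeff_nonneg {p q : MvPolynomial (Fin 2) ℤ} (hp : ∀ m, 0 ≤ p.coeff m)
    (hq : ∀ m, 0 ≤ q.coeff m) : ∀ m, 0 ≤ (p * q).coeff m := by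
  intro m
  rw [coeff_mul]
  exact Finset.sum_nonneg fun x _ => mul_nonneg (hp _) (hq _)

theorem g_nonneg : ∀ n j m, 0 ≤ (g j n).coeff m
  | 0, j, m => by simp [g, coeff_one]; split <;> norm_num
  | 1, j, m => by
      simp only [g, coeff_C_mul]
      exact mul_nonneg (by positivity) (by rw [coeff_X']; split <;> norm_num)
  | (n+2), j, m => by
      refine mul_coeff_nonneg (fun m' => ?_) (g_nonneg n (j+1)) m
      rw [coeff_add, coeff_C_mul, coeff_C_mul]
      have h1 : 0 ≤ (X (R := ℤ) (0 : Fin 2) ^ 2).coeff m' := by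
        rw [X_pow_eq_monomial, coeff_monomial]; split <;> norm_num
      have h2 : 0 ≤ (X (R := ℤ) (1 : Fin 2)).coeff m' := by
        rw [coeff_X']; split <;> norm_num
      positivity

theorem g_pos : ∀ n j, 1 ≤ j → 0 < (g j n).coeff (Finsupp.single (0 : Fin 2) n)
  | 0, j, hj => by simp [g]
  | 1, j, hj => by
      simp only [g, coeff_C_mul, coeff_X]
      simpa using (show 0 < j by omega)
  | (n+2), j, hj => by
      have IH := g_pos n (j+1) (by omega)
      set q := g (j+1) n with hq
      have hdef : g j (n+2)
          = (C ((j * (j+n+1) : ℕ) : ℤ) * X 0 ^ 2 + C (((n+1)^2 : ℕ) : ℤ) * X 1) * q := rfl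
      rw [hdef, add_mul, coeff_add, mul_assoc, coeff_C_mul, mul_assoc, coeff_C_mul]
      have h1 : (X (R := ℤ) (0 : Fin 2) ^ 2 * q).coeff (Finsupp.single (0 : Fin 2) (n+2))
          = q.coeff (Finsupp.single (0 : Fin 2) n) := by
        have : Finsupp.single (0 : Fin 2) (n+2)
            = Finsupp.single (0 : Fin 2) 1 + (Finsupp.single (0 : Fin 2) 1
              + Finsupp.single (0 : Fin 2) n) := by
          rw [← Finsupp.single_add, ← Finsupp.single_add]
          congr 1
          omega
        rw [this, pow_two, mul_assoc, coeff_X_mul, coeff_X_mul]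
      have h2 : (X (R := ℤ) (1 : Fin 2) * q).coeff (Finsupp.single (0 : Fin 2) (n+2)) = 0 := by
        classical
        rw [coeff_X_mul', if_neg]
        rw [Finsupp.support_single_ne_zero _ (by omega)]
        simp
      rw [h1, h2, mul_zero, add_zero]
      have : (0 : ℤ) < ((j * (j+n+1) : ℕ) : ℤ) := by
        have : 0 < j * (j+n+1) := by positivity
        exact_mod_cast this
      exact mul_pos this IH

theorem aeval_g : ∀ (n j : ℕ) (D : ℤ), D = 2 * (j : ℤ) + (n : ℤ) - 1 →
    aeval ![e1, e2] (g j n)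
      = ∏ i ∈ Finset.Ico j (j + n), (C (D - (i : ℤ)) * Xp + C (i : ℤ) * Yp)
  | 0, j, D, hD => by simp [g]
  | 1, j, D, hD => by
      have h1 : D - (j : ℤ) = j := by push_cast at hD; omega
      rw [g, map_mul, aeval_C, algebraMap_eq]
      simp only [aeval_X, Matrix.cons_val_zero]
      rw [show Finset.Ico j (j+1) = {j} from by ext x; simp [Nat.lt_succ_iff, Nat.le_antisymm_iff], Finset.prod_singleton, h1, e1]
      ring
  | (n+2), j, D, hD => by
      have hD' : D = 2 * ((j+1 : ℕ) : ℤ) + (n : ℤ) - 1 := by push_cast at hD ⊢; omega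
      have IH := aeval_g n (j+1) D hD'
      have hdef : g j (n+2)
          = (C ((j * (j+n+1) : ℕ) : ℤ) * X 0 ^ 2 + C (((n+1)^2 : ℕ) : ℤ) * X 1)
            * g (j+1) n := rfl
      rw [hdef, map_mul, IH]
      rw [show j + (n+2) = (j+n+1) + 1 from by omega,
        Finset.prod_Ico_succ_top (by omega : j ≤ j+n+1),
        Finset.prod_eq_prod_Ico_succ_bot (by omega : j < j+n+1),
        show (j+1) + n = j+n+1 from by omega] at *
      have h1 : D - (j : ℤ) = (j : ℤ) + n + 1 := by push_cast at hD; omega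
      have h2 : D - ((j+n+1 : ℕ) : ℤ) = (j : ℤ) := by push_cast at hD ⊢; omega
      have key : (C (D - (j : ℤ)) * Xp + C (j : ℤ) * Yp)
          * (C (D - ((j+n+1 : ℕ) : ℤ)) * Xp + C ((j+n+1 : ℕ) : ℤ) * Yp)
          = aeval ![e1, e2] (C ((j * (j+n+1) : ℕ) : ℤ) * X 0 ^ 2 + C (((n+1)^2 : ℕ) : ℤ) * X 1) := by
        rw [h1, h2]
        simp only [map_add, map_mul, map_pow, aeval_C, aeval_X, algebraMap_eq,
          Matrix.cons_val_zero, Matrix.cons_val_one, Matrix.head_cons]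
        push_cast
        simp only [map_add, map_mul, map_pow, map_one, map_natCast]
        rw [e1, e2]
        ring
      rw [← key]
      ring

/-- The top Chern class `c_{d+1}(Sym^d)` of a rank-2 bundle equals `c₂` times a
polynomial `P` in `c₁, c₂` with nonnegative coefficients, in which the monomial
`c₁^{d−1}` (i.e. `S^{d−1}`, `S` being the first variable) occurs with strictly
positive coefficient. -/
theorem stmt5 (d : ℕ) (hd : 1 ≤ d) :
    ∃ P : MvPolynomial (Fin 2) ℤ,
      (∀ m, 0 ≤ P.coeff m) ∧
      0 < P.coeff (Finsupp.single (0 : Fin 2) (d - 1)) ∧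
      MvPolynomial.homogeneousComponent (d + 1) (F d) =
        e2 * MvPolynomial.aeval ![e1, e2] P := by
  refine ⟨C ((d : ℤ)^2) * g 1 (d-1), ?_, ?_, ?_⟩
  · intro m
    rw [coeff_C_mul]
    exact mul_nonneg (by positivity) (g_nonneg _ _ _)
  · rw [coeff_C_mul]
    exact mul_pos (by positivity) (g_pos (d-1) 1 le_rfl)
  · -- compute the homogeneous component
    set L : ℕ → MvPolynomial (Fin 2) ℤ := fun i => C ((d : ℤ) - (i : ℤ)) * Xp + C (i : ℤ) * Yp
      with hL
    have hLhom : ∀ i, (L i).IsHomogeneous 1 := by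
      intro i
      have h1 : (C ((d : ℤ) - (i : ℤ)) * Xp).IsHomogeneous 1 := by
        have := (isHomogeneous_C (Fin 2) ((d : ℤ) - (i : ℤ))).mul (isHomogeneous_X ℤ (0 : Fin 2))
        rwa [zero_add] at this
      have h2 : (C ((i : ℤ)) * Yp).IsHomogeneous 1 := by
        have := (isHomogeneous_C (Fin 2) ((i : ℤ))).mul (isHomogeneous_X ℤ (1 : Fin 2))
        rwa [zero_add] at this
      exact h1.add h2
    have hF : F d = ∏ i ∈ Finset.range (d+1), (1 + L i) := by
      unfold F
      refine Finset.prod_congr rfl fun i _ => by rw [hL]; ring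
    have hcard : (Finset.range (d+1)).card = d + 1 := Finset.card_range _
    have hmain : homogeneousComponent (d+1) (F d) = ∏ i ∈ Finset.range (d+1), L i := by
      rw [hF]
      have := hc_prod_one_add (Finset.range (d+1)) L hLhom
      rwa [hcard] at this
    have hmid := aeval_g (d-1) 1 (d : ℤ) (by
      have : ((d-1 : ℕ) : ℤ) = (d : ℤ) - 1 := by
        rw [Nat.cast_sub hd]; norm_num
      rw [this]; ring)
    rw [show 1 + (d-1) = d from by omega] at hmid
    have hsplit : ∏ i ∈ Finset.range (d+1), L i
        = L 0 * (∏ i ∈ Finset.Ico 1 d, L i) * L d := by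
      rw [Finset.range_eq_Ico, Finset.prod_Ico_succ_top (by omega : 0 ≤ d),
        Finset.prod_eq_prod_Ico_succ_bot (by omega : 0 < d)]
    have hL0 : L 0 = C (d : ℤ) * Xp := by simp [hL]
    have hLd : L d = C (d : ℤ) * Yp := by simp [hL]
    rw [hmain, hsplit, hL0, hLd, map_mul, aeval_C, algebraMap_eq, hmid, e2, pow_two, map_mul]
    ring
end
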